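/- Let R_1 and R_2 be commutative rings, each equipped with a computable encoding (a Primcodable structure) under which equality, addition, and multiplication are computable. Let ι : R_1 → R_2 be a computable injective ring homomorphism whose range is a decidable (computable) subset of R_2, and suppose R_2 is generated as an R_1-module by elements ω_1,…,ω_r ∈ R_2, i.e., R_2 = {Σ_{i=1}^r ι(a_i)·ω_i : a_1,…,a_r ∈ R_1}. Assume that every computably enumerable subset of R_1^r is Diophantine over R_1. Then for every computably enumerable subset A ⊆ R_2, the set A_{R_1} = {(a_1,…,a_r) ∈ R_1^r : Σ_{i=1}^r ι(a_i)·ω_i ∈ A} is Diophantine over R_1. -/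

import Mathlib

/-- A subset `S ⊆ R^ι` is Diophantine over `R` if it is cut out by a single polynomial
with coefficients in `R` using finitely many existential quantifiers over `R`. -/
def IsDiophantine {R : Type*} [CommRing R] {ι : Type*} (S : Set (ι → R)) : Prop :=
  ∃ (m : ℕ) (f : MvPolynomial (ι ⊕ Fin m) R),
    S = {a | ∃ y : Fin m → R, MvPolynomial.eval (Sum.elim a y) f = 0}

private lemma computable_finSum {α R : Type} [Primcodable α] [Primcodable R] [AddCommMonoid R]
    (hadd : Computable fun p : R × R => p.1 + p.2) :
    ∀ {n : ℕ} (f : Fin n → α → R), (∀ i, Computable (f i)) →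
      Computable fun a => ∑ i, f i a := by
  intro n
  induction n with
  | zero => intro f _; simpa using Computable.const (0 : R)
  | succ n ih =>
    intro f hf
    have h1 : Computable fun a => f 0 a + ∑ i : Fin n, f i.succ a :=
      hadd.comp (Computable.pair (hf 0) (ih _ fun i => hf i.succ))
    exact h1.of_eq fun a => by rw [Fin.sum_univ_succ]

/-- Let `R₁`, `R₂` be computable commutative rings, `ι : R₁ → R₂` a computable
injective ring homomorphism with decidable range, and suppose `R₂` is generated as an
`R₁`-module by `ω₁, …, ω_r`.  If every computably enumerable subset of `R₁^r` is Diophantine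
over `R₁`, then for every computably enumerable `A ⊆ R₂` the set
`{(a₁,…,a_r) ∈ R₁^r : Σ ι(a_i)·ω_i ∈ A}` is Diophantine over `R₁`. -/
theorem pullback_of_listable_isDiophantine
    (R₁ : Type) [CommRing R₁] [Primcodable R₁]
    (R₂ : Type) [CommRing R₂] [Primcodable R₂]
    (heq₁ : ComputablePred fun p : R₁ × R₁ => p.1 = p.2)
    (hadd₁ : Computable fun p : R₁ × R₁ => p.1 + p.2)
    (hmul₁ : Computable fun p : R₁ × R₁ => p.1 * p.2)
    (heq₂ : ComputablePred fun p : R₂ × R₂ => p.1 = p.2)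
    (hadd₂ : Computable fun p : R₂ × R₂ => p.1 + p.2)
    (hmul₂ : Computable fun p : R₂ × R₂ => p.1 * p.2)
    (ι : R₁ →+* R₂) (hιcomp : Computable fun x : R₁ => ι x)
    (hιinj : Function.Injective ι)
    (hrange : ComputablePred fun x : R₂ => x ∈ Set.range ι)
    (r : ℕ) (ω : Fin r → R₂)
    (hgen : ∀ x : R₂, ∃ a : Fin r → R₁, x = ∑ i, ι (a i) * ω i)
    (hdio : ∀ S : Set (Fin r → R₁), REPred (· ∈ S) → IsDiophantine S)
    (A : Set R₂) (hA : REPred (· ∈ A)) :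
    IsDiophantine {a : Fin r → R₁ | (∑ i, ι (a i) * ω i) ∈ A} := by
  apply hdio
  have hg : Computable fun a : Fin r → R₁ => ∑ i, ι (a i) * ω i := by
    apply computable_finSum hadd₂
    intro i
    exact hmul₂.comp (Computable.pair
      (hιcomp.comp (Computable.fin_app.comp Computable.id (Computable.const i)))
      (Computable.const (ω i)))
  exact hA.comp hg
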